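/- Every selective ultrafilter U on ω satisfies ω→(U)ⁿ_k for all n,k ∈ ω: whenever the set [ω]ⁿ of n-element subsets of ω is partitioned into k pieces, there is a set H ∈ U such that [H]ⁿ is included in one piece. -/

import Mathlib

open Filter Set

/-- The vertical section of `A ⊆ ω × ω` at `n`. -/
def sec (A : Set (ℕ × ℕ)) (n : ℕ) : Set ℕ := {y | (n, y) ∈ A}

/-- Membership in the forcing poset `𝔓` of subsets of `ω × ω`. -/
def memP (A : Set (ℕ × ℕ)) : Prop :=
  {n | (sec A n).Infinite}.Infinite ∧
  (∀ n, (sec A n).Nonempty → (sec A n).Infinite) ∧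
  (∀ m n, m ≠ n → Disjoint (sec A m) (sec A n)) ∧
  (∀ p ∈ A, (p : ℕ × ℕ).1 < p.2) ∧
  (∀ p ∈ A, ∀ q ∈ A, (p : ℕ × ℕ).1 ≠ (q : ℕ × ℕ).2)

/-- A (nonprincipal) selective ultrafilter on ℕ. -/
def Selective (U : Ultrafilter ℕ) : Prop :=
  (U : Filter ℕ) ≤ Filter.cofinite ∧
  ∀ f : ℕ → ℕ, ∃ A ∈ U, Set.InjOn f A ∨ ∃ c, ∀ x ∈ A, f x = c

/-- Isomorphism of ultrafilters on ℕ via a permutation of ℕ. -/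
def UIso (V V' : Ultrafilter ℕ) : Prop :=
  ∃ f : Equiv.Perm ℕ, ∀ A : Set ℕ, (f : ℕ → ℕ) ⁻¹' A ∈ V ↔ A ∈ V'

/-- A sisnis ultrafilter: a selective-indexed sum of pairwise non-isomorphic
selective ultrafilters. -/
def Sisnis (W : Ultrafilter (ℕ × ℕ)) : Prop :=
  ∃ (U : Ultrafilter ℕ) (V : ℕ → Ultrafilter ℕ),
    Selective U ∧ (∀ n, Selective (V n)) ∧
    (∀ m n, m ≠ n → ¬ UIso (V m) (V n)) ∧
    ∀ A : Set (ℕ × ℕ), A ∈ W ↔ {n | sec A n ∈ V n} ∈ U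

/-- Formal symbols `x₁, …, xₙ` (left) and `y₁, …, yₙ` (right). -/
abbrev Symb (n : ℕ) := Fin n ⊕ Fin n

def symVal {n : ℕ} (a b : Fin n → ℕ) : Symb n → ℕ
  | Sum.inl i => a i
  | Sum.inr i => b i

/-- `τ` is an `n`-type: a linear pre-order of the symbols `x₁,…,xₙ,y₁,…,yₙ` with
`y₁ < ⋯ < yₙ`, each `xᵢ` strictly preceding `yᵢ`, and distinct equivalent symbols both `x`'s. -/
structure IsNType (n : ℕ) (τ : Symb n → Symb n → Prop) : Prop where
  refl : ∀ u, τ u u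
  trans : ∀ u v w, τ u v → τ v w → τ u w
  total : ∀ u v, τ u v ∨ τ v u
  y_lt : ∀ i j : Fin n, i < j → τ (Sum.inr i) (Sum.inr j) ∧ ¬ τ (Sum.inr j) (Sum.inr i)
  x_lt_y : ∀ i : Fin n, τ (Sum.inl i) (Sum.inr i) ∧ ¬ τ (Sum.inr i) (Sum.inl i)
  equiv_xx : ∀ u v, u ≠ v → τ u v → τ v u → (∃ i, u = Sum.inl i) ∧ (∃ j, v = Sum.inl j)

/-- `T n` is the number of `n`-types. -/
noncomputable def T (n : ℕ) : ℕ := Nat.card {τ : Symb n → Symb n → Prop // IsNType n τ}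

/-- An `n`-element subset of `ω × ω` realizes the `n`-type `τ`: listing it as
`{(a₁,b₁),…,(aₙ,bₙ)}` with `b₁ < ⋯ < bₙ`, interpreting `xᵢ` as `aᵢ` and `yᵢ` as `bᵢ`
makes the order and equality relations among the symbols exactly those of `τ`. -/
def Realizes {n : ℕ} (τ : Symb n → Symb n → Prop) (s : Set (ℕ × ℕ)) : Prop :=
  ∃ a b : Fin n → ℕ, StrictMono b ∧ s = Set.range (fun i => (a i, b i)) ∧
    ∀ u v : Symb n, τ u v ↔ symVal a b u ≤ symVal a b v

/-- An ultrafilter is `(n,t)`-weakly Ramsey if for every partition (coloring) of the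
`n`-element subsets into finitely many pieces there is `H` in the ultrafilter such that
the `n`-element subsets of `H` meet at most `t` pieces. -/
def WeaklyRamsey {α : Type} (U : Ultrafilter α) (n t : ℕ) : Prop :=
  ∀ (k : ℕ) (c : Set α → Fin k), ∃ H ∈ U,
    ({i : Fin k | ∃ s : Set α, s ⊆ H ∧ s.Finite ∧ s.ncard = n ∧ c s = i}).ncard ≤ t

/-- A non-P-point in standard position: a nonprincipal ultrafilter on `ω × ω` such that
the first projection is neither finite-to-one nor constant on any set of the ultrafilter. -/
def StdNonPpoint (W : Ultrafilter (ℕ × ℕ)) : Prop :=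
  (W : Filter (ℕ × ℕ)) ≤ Filter.cofinite ∧
  ∀ A ∈ W, (¬ ∀ m : ℕ, {p : ℕ × ℕ | p ∈ A ∧ p.1 = m}.Finite) ∧
    (¬ ∃ c : ℕ, ∀ p ∈ A, (p : ℕ × ℕ).1 = c)

/-- The three-functions property: every function on `ω × ω` is, on some set of the
ultrafilter, constant, or one-to-one, or `π₁` followed by a one-to-one function. -/
def ThreeFunctions (W : Ultrafilter (ℕ × ℕ)) : Prop :=
  ∀ f : ℕ × ℕ → ℕ, ∃ A ∈ W,
    (∃ c, ∀ p ∈ A, f p = c) ∨ Set.InjOn f A ∨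
    (∃ g : ℕ → ℕ, Function.Injective g ∧ ∀ p ∈ A, f p = g (p : ℕ × ℕ).1)

/-- `π₁` is a conservative map on `W` (combinatorial formulation). -/
def ConservativePi1 (W : Ultrafilter (ℕ × ℕ)) : Prop :=
  ∀ R : ℕ → ℕ → ℕ → Prop, ∃ S : ℕ → ℕ → Prop, ∀ f : ℕ → ℕ,
    ({p : ℕ × ℕ | R p.1 p.2 (f p.1)} ∈ W ↔ {x : ℕ | S x (f x)} ∈ W.map Prod.fst)

/-- Formal symbols `x₁, x₂, …` (left) and `y₁, y₂, …` (right). -/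
abbrev OSym := ℕ ⊕ ℕ

def osymVal (a b : ℕ → ℕ) : OSym → ℕ
  | Sum.inl i => a i
  | Sum.inr i => b i

/-- `τ` is an ω-type. -/
structure IsOmegaType (τ : OSym → OSym → Prop) : Prop where
  /-- `τ` is a linear pre-order whose quotient linear order has order type ω. -/
  rank : ∃ r : OSym → ℕ, Function.Surjective r ∧ ∀ u v, τ u v ↔ r u ≤ r v
  y_lt : ∀ i j : ℕ, i < j → τ (Sum.inr i) (Sum.inr j) ∧ ¬ τ (Sum.inr j) (Sum.inr i)
  x_le_y : ∀ i : ℕ, τ (Sum.inl i) (Sum.inr i)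
  /-- no equivalence class contains both an `x` and a `y` -/
  x_not_equiv_y : ∀ i j : ℕ, ¬ (τ (Sum.inl i) (Sum.inr j) ∧ τ (Sum.inr j) (Sum.inl i))
  /-- every class of an `x` contains infinitely many `x`'s -/
  x_class_infinite : ∀ i : ℕ,
    {j : ℕ | τ (Sum.inl i) (Sum.inl j) ∧ τ (Sum.inl j) (Sum.inl i)}.Infinite
  /-- there are infinitely many equivalence classes of `x`'s -/
  x_classes_infinite : ∀ F : Finset ℕ, ∃ i : ℕ, ∀ j ∈ F,
    ¬ (τ (Sum.inl i) (Sum.inl j) ∧ τ (Sum.inl j) (Sum.inl i))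

/-- An element of `𝔓` realizes the ω-type `τ`. -/
def RealizesOmega (τ : OSym → OSym → Prop) (A : Set (ℕ × ℕ)) : Prop :=
  ∃ a b : ℕ → ℕ, StrictMono b ∧ A = Set.range (fun i => (a i, b i)) ∧
    ∀ u v : OSym, τ u v ↔ osymVal a b u ≤ osymVal a b v

/-- `𝔓_τ`: the elements of `𝔓` realizing the ω-type `τ`. -/
def Ptau (τ : OSym → OSym → Prop) : Set (Set (ℕ × ℕ)) :=
  {A | memP A ∧ RealizesOmega τ A}

open Classical in
/-- The identification of `𝒫(ω × ω)` with the product space `2^(ω×ω)`. -/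
noncomputable def chi (A : Set (ℕ × ℕ)) : (ℕ × ℕ) → Bool :=
  fun p => if p ∈ A then true else false

def vertRank : Symb 2 → ℕ
  | Sum.inl _ => 0
  | Sum.inr i => (i : ℕ) + 1

/-- The 2-type `x₁ = x₂ < y₁ < y₂` of pairs lying in one vertical column. -/
def vertType (u v : Symb 2) : Prop := vertRank u ≤ vertRank v

lemma mem_infinite' (U : Ultrafilter ℕ) (hle : (U : Filter ℕ) ≤ Filter.cofinite)
    {A : Set ℕ} (hA : A ∈ U) : A.Infinite := by
  intro hfin
  have : Aᶜ ∈ U := hle (by simpa [Filter.mem_cofinite] using hfin)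
  exact (Ultrafilter.compl_mem_iff_notMem.mp this) hA

lemma qpoint' (U : Ultrafilter ℕ) (hU : Selective U) (f : ℕ → ℕ)
    (hf : ∀ m, (f ⁻¹' {m}).Finite) : ∃ B ∈ U, Set.InjOn f B := by
  obtain ⟨B, hB, h⟩ := hU.2 f
  refine ⟨B, hB, ?_⟩
  rcases h with h | ⟨c, hc⟩
  · exact h
  · exact absurd ((hf c).subset fun x hx => hc x hx) (mem_infinite' U hU.1 hB)

lemma diagonal' (U : Ultrafilter ℕ) (hU : Selective U) (A : ℕ → Set ℕ)
    (hA : ∀ x, A x ∈ U) :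
    ∃ C ∈ U, ∀ x ∈ C, ∀ y ∈ C, x < y → y ∈ A x := by
  classical
  set D : ℕ → Set ℕ := fun n => Set.Ioi n ∩ ⋂ m ∈ Set.Iic n, A m with hDdef
  have hDU : ∀ n, D n ∈ U := by
    intro n
    refine Filter.inter_mem (hU.1 ?_) ((Filter.biInter_mem (Set.finite_Iic n)).mpr fun m _ => hA m)
    simpa [Filter.mem_cofinite] using Set.finite_Iic n
  have hDself : ∀ y, y ∉ D y := fun y hy => lt_irrefl y hy.1
  -- least n with y ∉ D n
  set f : ℕ → ℕ := fun y => sInf {n | y ∉ D n} with hfdef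
  have hfmem : ∀ y, y ∉ D (f y) :=
    fun y => Nat.sInf_mem (⟨y, hDself y⟩ : {n | y ∉ D n}.Nonempty)
  have hflt : ∀ y n, n < f y → y ∈ D n := by
    intro y n hn
    by_contra h
    exact absurd (Nat.sInf_le h) (not_le.mpr hn)
  obtain ⟨B0, hB0U, h0⟩ := hU.2 f
  have hinj0 : Set.InjOn f B0 := by
    rcases h0 with h | ⟨cst, hc⟩
    · exact h
    · exfalso
      obtain ⟨y, hyB, hyD⟩ := Ultrafilter.nonempty_of_mem (Filter.inter_mem hB0U (hDU cst))
      exact (hc y hyB ▸ hfmem y) hyD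
  -- finiteness of small-f parts
  have hSfin : ∀ n, {y | y ∈ B0 ∧ f y ≤ n}.Finite := by
    intro n
    have hsub : {y | y ∈ B0 ∧ f y ≤ n} ⊆ ⋃ m ∈ Set.Iic n, {y | y ∈ B0 ∧ f y = m} := by
      rintro y ⟨hy, hfy⟩
      exact Set.mem_biUnion hfy ⟨hy, rfl⟩
    refine Set.Finite.subset (Set.Finite.biUnion (Set.finite_Iic n) ?_) hsub
    intro m _
    exact Set.Subsingleton.finite fun a ha b hb => hinj0 ha.1 hb.1 (ha.2.trans hb.2.symm)
  set g : ℕ → ℕ := fun n => sSup {y | y ∈ B0 ∧ f y ≤ n} + 1 with hgdef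
  have hg : ∀ n, ∀ y ∈ B0, g n ≤ y → y ∈ D n := by
    intro n y hyB hgy
    rcases le_or_gt (f y) n with h | h
    · exfalso
      have h2 : y ≤ sSup {y | y ∈ B0 ∧ f y ≤ n} := le_csSup (hSfin n).bddAbove ⟨hyB, h⟩
      have h3 : sSup {y | y ∈ B0 ∧ f y ≤ n} + 1 ≤ y := hgy
      omega
    · exact hflt y n h
  -- interval sequence
  set M : ℕ → ℕ := fun i => Nat.rec 0 (fun _ prev => prev + 1 + (Finset.range prev).sup g) i with hMdef
  have hMsucc : ∀ i, M (i + 1) = M i + 1 + (Finset.range (M i)).sup g := fun i => rfl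
  have hMmono : StrictMono M := strictMono_nat_of_lt_succ fun i => by rw [hMsucc]; omega
  have hgM : ∀ i x, x < M i → g x ≤ M (i + 1) := by
    intro i x hx
    rw [hMsucc]
    have := Finset.le_sup (f := g) (Finset.mem_range.mpr hx)
    omega
  -- index function
  set idx : ℕ → ℕ := fun y => sSup {i | M i ≤ y} with hidxdef
  have hidxbdd : ∀ y, BddAbove {i | M i ≤ y} := by
    intro y
    refine (Set.finite_Iic y).subset (fun i hi => ?_) |>.bddAbove
    exact le_trans (hMmono.le_apply) hi
  have hidxne : ∀ y, ({i | M i ≤ y} : Set ℕ).Nonempty := fun y => ⟨0, Nat.zero_le y⟩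
  have hidx1 : ∀ y, M (idx y) ≤ y := fun y => Nat.sSup_mem (hidxne y) (hidxbdd y)
  have hidx2 : ∀ y, y < M (idx y + 1) := by
    intro y
    by_contra h
    have : idx y + 1 ≤ idx y := le_csSup (hidxbdd y) (not_lt.mp h)
    omega
  have hidxmono : ∀ x y, x ≤ y → idx x ≤ idx y := by
    intro x y hxy
    exact le_csSup (hidxbdd y) (le_trans (hidx1 x) hxy)
  -- the two half-index functions
  obtain ⟨B1, hB1U, hinj1⟩ := qpoint' U hU (fun y => idx y / 2) (by
    intro m
    refine (Set.finite_Iio (M (2 * m + 2))).subset ?_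
    intro y hy
    simp only [Set.mem_preimage, Set.mem_singleton_iff] at hy
    have h1 := hidx2 y
    have : idx y + 1 ≤ 2 * m + 2 := by omega
    exact lt_of_lt_of_le h1 (hMmono.monotone this))
  obtain ⟨B2, hB2U, hinj2⟩ := qpoint' U hU (fun y => (idx y + 1) / 2) (by
    intro m
    refine (Set.finite_Iio (M (2 * m + 2))).subset ?_
    intro y hy
    simp only [Set.mem_preimage, Set.mem_singleton_iff] at hy
    have h1 := hidx2 y
    have : idx y + 1 ≤ 2 * m + 2 := by omega
    exact lt_of_lt_of_le h1 (hMmono.monotone this))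
  refine ⟨B0 ∩ (B1 ∩ B2), Filter.inter_mem hB0U (Filter.inter_mem hB1U hB2U), ?_⟩
  rintro x ⟨hx0, hx1, hx2⟩ y ⟨hy0, hy1, hy2⟩ hxy
  have hmono := hidxmono x y hxy.le
  have hsep : idx x + 2 ≤ idx y := by
    by_contra hcon
    have hcases : idx x / 2 = idx y / 2 ∨ (idx x + 1) / 2 = (idx y + 1) / 2 := by omega
    rcases hcases with h | h
    · exact absurd (hinj1 hx1 hy1 h) hxy.ne
    · exact absurd (hinj2 hx2 hy2 h) hxy.ne
  have hgx : g x ≤ y := by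
    have h1 : g x ≤ M (idx x + 2) := hgM (idx x + 1) x (hidx2 x)
    have h2 : M (idx x + 2) ≤ M (idx y) := hMmono.monotone hsep
    exact le_trans h1 (le_trans h2 (hidx1 y))
  have hyD := hg x y hy0 hgx
  exact Set.mem_iInter₂.mp hyD.2 x (Set.mem_Iic.mpr le_rfl)

lemma ramsey' (U : Ultrafilter ℕ) (hU : Selective U) (k : ℕ) :
    ∀ (n : ℕ) (c : Set ℕ → Fin (k + 1)),
      ∃ H ∈ U, ∃ i, ∀ s ⊆ H, s.Finite → s.ncard = n → c s = i := by
  intro n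
  induction n with
  | zero =>
    intro c
    refine ⟨Set.univ, Filter.univ_mem, c ∅, fun s _ hfin hcard => ?_⟩
    rw [Set.ncard_eq_zero hfin] at hcard
    rw [hcard]
  | succ n ih =>
    intro c
    choose H hHU i hi using fun x => ih (fun s => c (insert x s))
    have hex : ∃ j, {x | i x = j} ∈ U := by
      by_contra h
      push_neg at h
      have h2 : (⋂ j, {x | i x = j}ᶜ) ∈ U :=
        (Filter.iInter_mem).mpr fun j => Ultrafilter.compl_mem_iff_notMem.mpr (h j)
      obtain ⟨x, hx⟩ := Ultrafilter.nonempty_of_mem h2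
      simp only [Set.mem_iInter, Set.mem_compl_iff, Set.mem_setOf_eq] at hx
      exact hx (i x) rfl
    obtain ⟨j, hj⟩ := hex
    obtain ⟨C, hCU, hC⟩ := diagonal' U hU H hHU
    refine ⟨C ∩ {x | i x = j}, Filter.inter_mem hCU hj, j, ?_⟩
    intro s hs hfin hcard
    have hne : s.Nonempty := by
      rw [← Set.ncard_pos hfin]; omega
    set x := sInf s with hxdef
    have hxs : x ∈ s := Nat.sInf_mem hne
    have hxC : x ∈ C ∩ {x | i x = j} := hs hxs
    have hsub : s \ {x} ⊆ H x := by
      rintro y ⟨hys, hyx⟩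
      have hyC : y ∈ C ∩ {x | i x = j} := hs hys
      have : x < y := lt_of_le_of_ne (Nat.sInf_le hys) (Ne.symm hyx)
      exact hC x hxC.1 y hyC.1 this
    have hfin' : (s \ {x}).Finite := hfin.subset Set.diff_subset
    have hcard' : (s \ {x}).ncard = n := by
      have := Set.ncard_diff_singleton_of_mem hxs
      omega
    have := hi x (s \ {x}) hsub hfin' hcard'
    rw [Set.insert_diff_singleton, Set.insert_eq_self.mpr hxs] at this
    rw [this]
    exact hxC.2

/-- every selective ultrafilter U on ω satisfies ω→(U)ⁿ_k for all n, k. -/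
theorem stmt19 (U : Ultrafilter ℕ) (hU : Selective U) (n k : ℕ)
    (c : Set ℕ → Fin k) :
    ∃ H ∈ U, ∃ i : Fin k,
      ∀ s : Set ℕ, s ⊆ H → s.Finite → s.ncard = n → c s = i := by
  obtain _ | k := k
  · exact (c ∅).elim0
  · exact ramsey' U hU k n c
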